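/- arXiv:1903.03580 — 2 statements merged into one kernel-verified Lean document; each statement's English description precedes it below -/
import Mathlib

section
/- There exists a constant C > 0 such that for every nonnegative measurable function ψ on ℝ × (0,∞), ( ∫_{ℝ³} ( ∫_0^∞ [⟨(η² + θ²)/ξ⟩^{1/2} / ⟨τ − ξ⁵ − η²/ξ⟩²] · [η/(η² + θ²)] ψ(ξ,η) dη )² dτ dθ dξ )^{1/2} ≤ C ( ∫_ℝ ∫_0^∞ ψ(ξ,η)² dη dξ )^{1/2}, where the outer integration is over (τ, θ, ξ) ∈ ℝ × ℝ × (ℝ \ {0}). (This is the core estimate proving ‖μ(t) W₂ h‖_{X^{0,1/2}} ≲ ‖χ_{t>0} h‖_{ℋ⁰_{x,t}} for the boundary operator W₂.) -/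
open MeasureTheory
open scoped ENNReal

/-- Japanese bracket `⟨x⟩ = (1 + x²)^{1/2}`. -/
noncomputable def jap (x : ℝ) : ℝ := Real.sqrt (1 + x ^ 2)

open Set

set_option maxHeartbeats 1000000




lemma jap_sq (x : ℝ) : jap x ^ 2 = 1 + x ^ 2 := Real.sq_sqrt (by positivity)

lemma jap_nonneg (x : ℝ) : 0 ≤ jap x := Real.sqrt_nonneg _

lemma jap_half_le (z : ℝ) : jap z ^ ((1:ℝ)/2) ≤ 1 + Real.sqrt |z| := by
  rw [← Real.sqrt_eq_rpow]
  have h2 : jap z ≤ (1 + Real.sqrt |z|) ^ 2 := by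
    have hz : Real.sqrt |z| ^ 2 = |z| := Real.sq_sqrt (abs_nonneg z)
    have : jap z ≤ 1 + |z| := by
      have : (1:ℝ) + z^2 ≤ (1 + |z|)^2 := by
        have : z ^ 2 = |z| ^ 2 := (sq_abs z).symm
        nlinarith [abs_nonneg z]
      calc jap z ≤ Real.sqrt ((1+|z|)^2) := Real.sqrt_le_sqrt this
        _ = 1 + |z| := Real.sqrt_sq (by positivity)
    nlinarith [Real.sqrt_nonneg |z|]
  calc Real.sqrt (jap z) ≤ Real.sqrt ((1 + Real.sqrt |z|)^2) := Real.sqrt_le_sqrt h2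
    _ = 1 + Real.sqrt |z| := Real.sqrt_sq (by positivity)

theorem my_lintegral_image {s : Set ℝ} {f f' : ℝ → ℝ} (hs : MeasurableSet s)
    (hf' : ∀ x ∈ s, HasDerivWithinAt f (f' x) s x) (hf : Set.InjOn f s) (g : ℝ → ℝ≥0∞) :
    ∫⁻ x in f '' s, g x = ∫⁻ x in s, ENNReal.ofReal |f' x| * g (f x) := by
  simpa only [ContinuousLinearMap.det_toSpanSingleton] using
    lintegral_image_eq_lintegral_abs_det_fderiv_mul volume hs
      (fun x hx => (hf' x hx).hasFDerivWithinAt) hf g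

/-- Lemma A: `∫ (1+(a-u)²)⁻¹ du ≤ 4`. -/
lemma lemA (a : ℝ) : ∫⁻ u : ℝ, ENNReal.ofReal ((1+(a-u)^2)⁻¹) ≤ ENNReal.ofReal 4 := by
  have hsq : ∀ u : ℝ, (a-u)^2 = (u-a)^2 := fun u => by ring
  simp_rw [hsq]
  have h1 : ∫⁻ u : ℝ, ENNReal.ofReal ((1+(u-a)^2)⁻¹)
      = ENNReal.ofReal (∫ u : ℝ, (1+(u-a)^2)⁻¹) := by
    rw [MeasureTheory.ofReal_integral_eq_lintegral_ofReal]
    · exact (integrable_inv_one_add_sq.comp_sub_right a)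
    · filter_upwards with u; positivity
  rw [h1, MeasureTheory.integral_sub_right_eq_self (fun x => (1+x^2)⁻¹) a,
    integral_univ_inv_one_add_sq]
  exact ENNReal.ofReal_le_ofReal (by linarith [Real.pi_le_four])

lemma lemA' (a : ℝ) : ∫⁻ u : ℝ, ENNReal.ofReal ((1+(u-a)^2)⁻¹) ≤ ENNReal.ofReal 4 := by
  have hsq : ∀ u : ℝ, (u-a)^2 = (a-u)^2 := fun u => by ring
  simp_rw [hsq]; exact lemA a

/-- Lemma B. -/
lemma lemB (ξ c : ℝ) (hξ : ξ ≠ 0) :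
    ∫⁻ η in Ioi (0:ℝ), ENNReal.ofReal (2*η*(1+(c-η^2/ξ)^2)⁻¹) ≤ ENNReal.ofReal (4*|ξ|) := by
  have hder : ∀ x ∈ Ioi (0:ℝ), HasDerivWithinAt (fun η : ℝ => η^2/ξ) (2*x/ξ) (Ioi 0) x := by
    intro x hx
    have := (hasDerivAt_pow 2 x).div_const ξ
    simpa using this.hasDerivWithinAt
  have hinj : Set.InjOn (fun η : ℝ => η^2/ξ) (Ioi 0) := by
    intro a ha b hb h
    simp only at h
    have h2 : a^2 = b^2 := by
      field_simp at h; exact h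
    have h3 : (a-b)*(a+b) = 0 := by nlinarith
    rcases mul_eq_zero.mp h3 with h4 | h4
    · linarith
    · have := mem_Ioi.mp ha; have := mem_Ioi.mp hb; linarith
  have him := my_lintegral_image measurableSet_Ioi hder hinj
    (fun u => ENNReal.ofReal ((1+(c-u)^2)⁻¹))
  have hpt : ∀ η ∈ Ioi (0:ℝ), ENNReal.ofReal (2*η*(1+(c-η^2/ξ)^2)⁻¹)
      = ENNReal.ofReal |ξ| * (ENNReal.ofReal |2*η/ξ| * ENNReal.ofReal ((1+(c-η^2/ξ)^2)⁻¹)) := by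
    intro η hη
    rw [← ENNReal.ofReal_mul (abs_nonneg _), ← ENNReal.ofReal_mul (by positivity)]
    congr 1
    rw [abs_div, abs_mul]
    rw [abs_of_pos (mem_Ioi.mp hη), abs_of_pos (by norm_num : (0:ℝ) < 2)]
    field_simp
  calc ∫⁻ η in Ioi (0:ℝ), ENNReal.ofReal (2*η*(1+(c-η^2/ξ)^2)⁻¹)
      = ∫⁻ η in Ioi (0:ℝ), ENNReal.ofReal |ξ| *
          (ENNReal.ofReal |2*η/ξ| * ENNReal.ofReal ((1+(c-η^2/ξ)^2)⁻¹)) :=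
        setLIntegral_congr_fun measurableSet_Ioi hpt
    _ = ENNReal.ofReal |ξ| * ∫⁻ η in Ioi (0:ℝ),
          ENNReal.ofReal |2*η/ξ| * ENNReal.ofReal ((1+(c-η^2/ξ)^2)⁻¹) :=
        lintegral_const_mul' _ _ ENNReal.ofReal_ne_top
    _ = ENNReal.ofReal |ξ| * ∫⁻ u in (fun η : ℝ => η^2/ξ) '' Ioi 0,
          ENNReal.ofReal ((1+(c-u)^2)⁻¹) := by rw [him]
    _ ≤ ENNReal.ofReal |ξ| * ∫⁻ u : ℝ, ENNReal.ofReal ((1+(c-u)^2)⁻¹) := by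
        gcongr
        exact Measure.restrict_le_self
    _ ≤ ENNReal.ofReal |ξ| * ENNReal.ofReal 4 := by gcongr; exact lemA c
    _ = ENNReal.ofReal (4*|ξ|) := by rw [← ENNReal.ofReal_mul (abs_nonneg _)]; ring_nf

/-- Lemma C1: Poisson kernel integral. -/
lemma lemC1 {η : ℝ} (hη : 0 < η) :
    ∫⁻ θ : ℝ, ENNReal.ofReal (η/(η^2+θ^2)) ≤ ENNReal.ofReal 4 := by
  have hder : ∀ x ∈ (univ : Set ℝ), HasDerivWithinAt (fun θ : ℝ => θ/η) (1/η) univ x := by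
    intro x _
    have := ((hasDerivAt_id x).div_const η).hasDerivWithinAt (s := univ)
    simpa [one_div] using this
  have hinj : Set.InjOn (fun θ : ℝ => θ/η) univ := fun a _ b _ h => by
    field_simp at h; exact h
  have him := my_lintegral_image MeasurableSet.univ hder hinj
    (fun u => ENNReal.ofReal ((1+u^2)⁻¹))
  have himg : (fun θ : ℝ => θ/η) '' univ = univ := by
    apply Set.image_univ_of_surjective
    intro y; exact ⟨y*η, by field_simp⟩
  rw [himg] at him
  have hpt : ∀ θ : ℝ, ENNReal.ofReal (η/(η^2+θ^2))
      = ENNReal.ofReal |1/η| * ENNReal.ofReal ((1+(θ/η)^2)⁻¹) := by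
    intro θ
    rw [← ENNReal.ofReal_mul (abs_nonneg _)]
    congr 1
    rw [abs_of_pos (by positivity : (0:ℝ) < 1/η)]
    rw [div_pow]
    rw [show (1:ℝ) + θ^2/η^2 = (η^2+θ^2)/η^2 by field_simp]
    field_simp
  calc ∫⁻ θ : ℝ, ENNReal.ofReal (η/(η^2+θ^2))
      = ∫⁻ θ : ℝ, ENNReal.ofReal |1/η| * ENNReal.ofReal ((1+(θ/η)^2)⁻¹) :=
        lintegral_congr hpt
    _ = ∫⁻ u : ℝ, ENNReal.ofReal ((1+u^2)⁻¹) := by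
        have him' := him
        simp only [Measure.restrict_univ] at him'
        exact him'.symm
    _ ≤ ENNReal.ofReal 4 := by simpa using lemA' 0


lemma lint_Ioo {c r : ℝ} (hc : 0 < c) (hr : -1 < r) :
    ∫⁻ t in Ioo (0:ℝ) c, ENNReal.ofReal (t^r) = ENNReal.ofReal (c^(r+1)/(r+1)) := by
  have hint : IntervalIntegrable (fun t : ℝ => t^r) volume 0 c :=
    intervalIntegral.intervalIntegrable_rpow' hr
  have hIoc : IntegrableOn (fun t : ℝ => t^r) (Ioc 0 c) volume := by
    rw [← intervalIntegrable_iff_integrableOn_Ioc_of_le hc.le]; exact hint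
  have h1 : ∫⁻ t in Ioo (0:ℝ) c, ENNReal.ofReal (t^r)
      = ∫⁻ t in Ioc (0:ℝ) c, ENNReal.ofReal (t^r) := setLIntegral_congr Ioo_ae_eq_Ioc
  rw [h1, ← MeasureTheory.ofReal_integral_eq_lintegral_ofReal hIoc]
  · rw [← intervalIntegral.integral_of_le hc.le, integral_rpow (Or.inl hr)]
    congr 1
    rw [Real.zero_rpow (by linarith), sub_zero]
  · refine (ae_restrict_iff' measurableSet_Ioc).2 (ae_of_all _ fun t ht => ?_)
    exact Real.rpow_nonneg ht.1.le _

lemma lint_Ioi {c r : ℝ} (hc : 0 < c) (hr : r < -1) :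
    ∫⁻ t in Ioi c, ENNReal.ofReal (t^r) = ENNReal.ofReal (-c^(r+1)/(r+1)) := by
  rw [← MeasureTheory.ofReal_integral_eq_lintegral_ofReal
    (integrableOn_Ioi_rpow_of_lt hr hc)]
  · rw [integral_Ioi_rpow_of_lt hr hc]
  · refine (ae_restrict_iff' measurableSet_Ioi).2 (ae_of_all _ fun t ht => ?_)
    exact Real.rpow_nonneg (hc.trans ht).le _

-- specific values
lemma lint_Ioo_half {c : ℝ} (hc : 0 < c) :
    ∫⁻ t in Ioo (0:ℝ) c, ENNReal.ofReal (t^(-(1:ℝ)/2)) = ENNReal.ofReal (2*Real.sqrt c) := by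
  rw [show (-(1:ℝ)/2) = (-(1:ℝ)/2) from rfl, lint_Ioo hc (by norm_num)]
  congr 1
  rw [show (-(1:ℝ)/2 + 1) = (1:ℝ)/2 by norm_num, ← Real.sqrt_eq_rpow]
  ring

lemma lint_Ioo_sqrt {c : ℝ} (hc : 0 < c) :
    ∫⁻ t in Ioo (0:ℝ) c, ENNReal.ofReal (Real.sqrt t) = ENNReal.ofReal (2/3*(c*Real.sqrt c)) := by
  have h : ∀ t ∈ Ioo (0:ℝ) c, ENNReal.ofReal (Real.sqrt t) = ENNReal.ofReal (t^((1:ℝ)/2)) := by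
    intro t ht; rw [Real.sqrt_eq_rpow]
  rw [setLIntegral_congr_fun measurableSet_Ioo h, lint_Ioo hc (by norm_num)]
  congr 1
  rw [show ((1:ℝ)/2 + 1) = (3:ℝ)/2 by norm_num]
  rw [show c^((3:ℝ)/2) = c^(1 + (1:ℝ)/2) by norm_num, Real.rpow_add hc, Real.rpow_one,
    ← Real.sqrt_eq_rpow]
  ring

lemma lint_Ioi_32 {c : ℝ} (hc : 0 < c) :
    ∫⁻ t in Ioi c, ENNReal.ofReal (t^(-(3:ℝ)/2)) = ENNReal.ofReal (2/Real.sqrt c) := by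
  rw [lint_Ioi hc (by norm_num)]
  congr 1
  rw [show (-(3:ℝ)/2 + 1) = -((1:ℝ)/2) by norm_num, Real.rpow_neg hc.le, ← Real.sqrt_eq_rpow]
  field_simp

lemma lint_Ioi_52 {c : ℝ} (hc : 0 < c) :
    ∫⁻ t in Ioi c, ENNReal.ofReal (t^(-(5:ℝ)/2)) = ENNReal.ofReal (2/(3*c*Real.sqrt c)) := by
  rw [lint_Ioi hc (by norm_num)]
  congr 1
  rw [show (-(5:ℝ)/2 + 1) = -((3:ℝ)/2) by norm_num, Real.rpow_neg hc.le]
  rw [show c^((3:ℝ)/2) = c^(1 + (1:ℝ)/2) by norm_num, Real.rpow_add hc, Real.rpow_one,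
    ← Real.sqrt_eq_rpow]
  field_simp


lemma lint_const_mul_ofReal {a : ℝ} (ha : 0 ≤ a) (f : ℝ → ℝ) (s : Set ℝ) :
    ∫⁻ t in s, ENNReal.ofReal (a * f t) = ENNReal.ofReal a * ∫⁻ t in s, ENNReal.ofReal (f t) := by
  simp_rw [ENNReal.ofReal_mul ha]
  exact lintegral_const_mul' _ _ ENNReal.ofReal_ne_top

lemma split_Ioi {c : ℝ} (hc : 0 < c) (f : ℝ → ℝ≥0∞) :
    ∫⁻ t in Ioi (0:ℝ), f t ≤ (∫⁻ t in Ioo (0:ℝ) c, f t) + ∫⁻ t in Ioi c, f t := by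
  have h1 : Ioi (0:ℝ) ⊆ Ioo 0 c ∪ Ici c := by
    intro x hx
    rcases lt_or_ge x c with h | h
    · exact Or.inl ⟨hx, h⟩
    · exact Or.inr h
  calc ∫⁻ t in Ioi (0:ℝ), f t ≤ ∫⁻ t in Ioo (0:ℝ) c ∪ Ici c, f t := lintegral_mono_set h1
    _ ≤ (∫⁻ t in Ioo (0:ℝ) c, f t) + ∫⁻ t in Ici c, f t := lintegral_union_le _ _ _
    _ = (∫⁻ t in Ioo (0:ℝ) c, f t) + ∫⁻ t in Ioi c, f t := by
        rw [setLIntegral_congr (Ioi_ae_eq_Ici (μ := volume) (a := c)).symm]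

/-- Lemma C3. -/
lemma lemC3 {θ : ℝ} (hθ : θ ≠ 0) :
    ∫⁻ η in Ioi (0:ℝ), ENNReal.ofReal (Real.sqrt η/(η^2+θ^2)) ≤
      ENNReal.ofReal (3/Real.sqrt |θ|) := by
  set c := |θ| with hcdef
  have hc : 0 < c := abs_pos.mpr hθ
  have hc2 : θ^2 = c^2 := (sq_abs θ).symm
  have hsc : Real.sqrt c * Real.sqrt c = c := Real.mul_self_sqrt hc.le
  refine le_trans (split_Ioi hc _) ?_
  have hA : ∫⁻ η in Ioo (0:ℝ) c, ENNReal.ofReal (Real.sqrt η/(η^2+θ^2))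
      ≤ ENNReal.ofReal (2/3/Real.sqrt c) := by
    have hb : ∀ η ∈ Ioo (0:ℝ) c, ENNReal.ofReal (Real.sqrt η/(η^2+θ^2))
        ≤ ENNReal.ofReal ((1/c^2) * Real.sqrt η) := by
      intro η hη
      apply ENNReal.ofReal_le_ofReal
      rw [div_eq_mul_inv, mul_comm (1/c^2)]
      apply mul_le_mul_of_nonneg_left _ (Real.sqrt_nonneg η)
      rw [one_div]
      apply inv_anti₀ (by positivity)
      nlinarith [sq_nonneg η]
    calc ∫⁻ η in Ioo (0:ℝ) c, ENNReal.ofReal (Real.sqrt η/(η^2+θ^2))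
        ≤ ∫⁻ η in Ioo (0:ℝ) c, ENNReal.ofReal ((1/c^2) * Real.sqrt η) :=
          lintegral_mono_ae ((ae_restrict_iff' measurableSet_Ioo).2 (ae_of_all _ hb))
      _ = ENNReal.ofReal (1/c^2) * ENNReal.ofReal (2/3*(c*Real.sqrt c)) := by
          rw [lint_const_mul_ofReal (by positivity), lint_Ioo_sqrt hc]
      _ = ENNReal.ofReal (2/3/Real.sqrt c) := by
          rw [← ENNReal.ofReal_mul (by positivity)]
          congr 1
          field_simp
          nlinarith [hsc]
  have hB : ∫⁻ η in Ioi c, ENNReal.ofReal (Real.sqrt η/(η^2+θ^2))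
      ≤ ENNReal.ofReal (2/Real.sqrt c) := by
    have hb : ∀ η ∈ Ioi c, ENNReal.ofReal (Real.sqrt η/(η^2+θ^2))
        ≤ ENNReal.ofReal (η^(-(3:ℝ)/2)) := by
      intro η hη
      have hηpos : (0:ℝ) < η := hc.trans hη
      apply ENNReal.ofReal_le_ofReal
      have h1 : Real.sqrt η/(η^2+θ^2) ≤ Real.sqrt η/η^2 := by
        apply div_le_div_of_nonneg_left (Real.sqrt_nonneg η) (by positivity)
        nlinarith [sq_nonneg θ]
      refine h1.trans (le_of_eq ?_)
      have he : η^(-(3:ℝ)/2) = η^((1:ℝ)/2) / η^((2:ℕ):ℝ) := by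
        rw [← Real.rpow_sub hηpos]; norm_num
      rw [he, ← Real.sqrt_eq_rpow, Real.rpow_natCast]
    calc ∫⁻ η in Ioi c, ENNReal.ofReal (Real.sqrt η/(η^2+θ^2))
        ≤ ∫⁻ η in Ioi c, ENNReal.ofReal (η^(-(3:ℝ)/2)) :=
          lintegral_mono_ae ((ae_restrict_iff' measurableSet_Ioi).2 (ae_of_all _ hb))
      _ = ENNReal.ofReal (2/Real.sqrt c) := lint_Ioi_32 hc
  refine le_trans (add_le_add hA hB) ?_
  rw [← ENNReal.ofReal_add (by positivity) (by positivity)]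
  apply ENNReal.ofReal_le_ofReal
  have hsqc : 0 < Real.sqrt c := Real.sqrt_pos.mpr hc
  rw [div_add_div _ _ (ne_of_gt hsqc) (ne_of_gt hsqc), div_le_div_iff₀ (by positivity) (by positivity)]
  ring_nf
  nlinarith [hsqc]


/-- Lemma C2. -/
lemma lemC2 {η : ℝ} (hη : 0 < η) :
    ∫⁻ θ : ℝ, ENNReal.ofReal (η/(Real.sqrt |θ| * (η^2+θ^2))) ≤
      ENNReal.ofReal (16/3/Real.sqrt η) := by
  set h : ℝ → ℝ≥0∞ := fun θ => ENNReal.ofReal (η/(Real.sqrt |θ| * (η^2+θ^2))) with hh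
  have hsη : Real.sqrt η * Real.sqrt η = η := Real.mul_self_sqrt hη.le
  have hsηpos : 0 < Real.sqrt η := Real.sqrt_pos.mpr hη
  -- one-sided bound
  have hside : ∫⁻ θ in Ioi (0:ℝ), h θ ≤ ENNReal.ofReal (8/3/Real.sqrt η) := by
    refine le_trans (split_Ioi hη _) ?_
    have hA : ∫⁻ θ in Ioo (0:ℝ) η, h θ ≤ ENNReal.ofReal (2/Real.sqrt η) := by
      have hb : ∀ θ ∈ Ioo (0:ℝ) η, h θ ≤ ENNReal.ofReal ((1/η) * θ^(-(1:ℝ)/2)) := by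
        intro θ hθ
        have hθ0 : (0:ℝ) < θ := hθ.1
        have hsθ : Real.sqrt θ * Real.sqrt θ = θ := Real.mul_self_sqrt hθ0.le
        have hsθpos : 0 < Real.sqrt θ := Real.sqrt_pos.mpr hθ0
        apply ENNReal.ofReal_le_ofReal
        rw [abs_of_pos hθ0]
        have h1 : η/(Real.sqrt θ * (η^2+θ^2)) ≤ η/(Real.sqrt θ * η^2) := by
          apply div_le_div_of_nonneg_left hη.le (by positivity)
          nlinarith [sq_nonneg θ]
        refine h1.trans (le_of_eq ?_)
        have he : θ^(-(1:ℝ)/2) = (Real.sqrt θ)⁻¹ := by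
          rw [show (-(1:ℝ)/2) = -((1:ℝ)/2) by norm_num, Real.rpow_neg hθ0.le,
            ← Real.sqrt_eq_rpow]
        rw [he]
        field_simp
      calc ∫⁻ θ in Ioo (0:ℝ) η, h θ
          ≤ ∫⁻ θ in Ioo (0:ℝ) η, ENNReal.ofReal ((1/η) * θ^(-(1:ℝ)/2)) :=
            lintegral_mono_ae ((ae_restrict_iff' measurableSet_Ioo).2 (ae_of_all _ hb))
        _ = ENNReal.ofReal (1/η) * ENNReal.ofReal (2*Real.sqrt η) := by
            rw [lint_const_mul_ofReal (by positivity), lint_Ioo_half hη]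
        _ = ENNReal.ofReal (2/Real.sqrt η) := by
            rw [← ENNReal.ofReal_mul (by positivity)]
            congr 1
            field_simp
            nlinarith [hsη]
    have hB : ∫⁻ θ in Ioi η, h θ ≤ ENNReal.ofReal (2/3/Real.sqrt η) := by
      have hb : ∀ θ ∈ Ioi η, h θ ≤ ENNReal.ofReal (η * θ^(-(5:ℝ)/2)) := by
        intro θ hθ
        have hθ0 : (0:ℝ) < θ := hη.trans hθ
        have hsθ : Real.sqrt θ * Real.sqrt θ = θ := Real.mul_self_sqrt hθ0.le
        have hsθpos : 0 < Real.sqrt θ := Real.sqrt_pos.mpr hθ0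
        apply ENNReal.ofReal_le_ofReal
        rw [abs_of_pos hθ0]
        have h1 : η/(Real.sqrt θ * (η^2+θ^2)) ≤ η/(Real.sqrt θ * θ^2) := by
          apply div_le_div_of_nonneg_left hη.le (by positivity)
          nlinarith [sq_nonneg η]
        refine h1.trans (le_of_eq ?_)
        have he : θ^(-(5:ℝ)/2) = (Real.sqrt θ * θ^2)⁻¹ := by
          have : θ^(-(5:ℝ)/2) = (θ^((1:ℝ)/2) * θ^((2:ℕ):ℝ))⁻¹ := by
            rw [← Real.rpow_add hθ0, ← Real.rpow_neg hθ0.le]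
            norm_num
          rw [this, ← Real.sqrt_eq_rpow, Real.rpow_natCast]
        rw [he]
        field_simp
      calc ∫⁻ θ in Ioi η, h θ
          ≤ ∫⁻ θ in Ioi η, ENNReal.ofReal (η * θ^(-(5:ℝ)/2)) :=
            lintegral_mono_ae ((ae_restrict_iff' measurableSet_Ioi).2 (ae_of_all _ hb))
        _ = ENNReal.ofReal η * ENNReal.ofReal (2/(3*η*Real.sqrt η)) := by
            rw [lint_const_mul_ofReal hη.le, lint_Ioi_52 hη]
        _ = ENNReal.ofReal (2/3/Real.sqrt η) := by
            rw [← ENNReal.ofReal_mul hη.le]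
            congr 1
            field_simp
    refine le_trans (add_le_add hA hB) ?_
    rw [← ENNReal.ofReal_add (by positivity) (by positivity)]
    apply ENNReal.ofReal_le_ofReal
    rw [div_add_div _ _ (by positivity) (by positivity), div_le_div_iff₀ (by positivity) (by positivity)]
    ring_nf
    nlinarith [hsηpos]
  -- reflection
  have hrefl : ∫⁻ θ in Iio (0:ℝ), h θ = ∫⁻ θ in Ioi (0:ℝ), h θ := by
    have himg : Iio (0:ℝ) = (fun x : ℝ => -x) '' Ioi 0 := by
      ext x
      simp only [mem_image, mem_Ioi, mem_Iio]
      constructor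
      · rintro hx; exact ⟨-x, by linarith, by ring⟩
      · rintro ⟨y, hy, rfl⟩; linarith
    have hder : ∀ x ∈ Ioi (0:ℝ), HasDerivWithinAt (fun x : ℝ => -x) (-1) (Ioi 0) x :=
      fun x _ => (hasDerivAt_neg x).hasDerivWithinAt
    have hinj : Set.InjOn (fun x : ℝ => -x) (Ioi 0) := fun a _ b _ hab => by
      simpa using hab
    rw [himg, my_lintegral_image measurableSet_Ioi hder hinj h]
    apply setLIntegral_congr_fun measurableSet_Ioi
    intro x hx
    simp [hh, abs_neg, neg_sq]
  have htot := lintegral_add_compl (μ := volume) h (measurableSet_Ici (a := (0:ℝ)))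
  have hIci : ∫⁻ θ in Ici (0:ℝ), h θ = ∫⁻ θ in Ioi (0:ℝ), h θ :=
    (setLIntegral_congr (Ioi_ae_eq_Ici (μ := volume) (a := (0:ℝ)))).symm
  have hcompl : (Ici (0:ℝ))ᶜ = Iio 0 := by simp
  calc ∫⁻ θ : ℝ, h θ = (∫⁻ θ in Ici (0:ℝ), h θ) + ∫⁻ θ in (Ici (0:ℝ))ᶜ, h θ := htot.symm
    _ = (∫⁻ θ in Ioi (0:ℝ), h θ) + ∫⁻ θ in Ioi (0:ℝ), h θ := by rw [hIci, hcompl, hrefl]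
    _ ≤ ENNReal.ofReal (8/3/Real.sqrt η) + ENNReal.ofReal (8/3/Real.sqrt η) :=
        add_le_add hside hside
    _ = ENNReal.ofReal (16/3/Real.sqrt η) := by
        rw [← ENNReal.ofReal_add (by positivity) (by positivity)]
        congr 1
        ring


lemma lintegral_sq_le {μ : Measure ℝ} {f g : ℝ → ℝ≥0∞} (hf : AEMeasurable f μ)
    (hg : AEMeasurable g μ) :
    (∫⁻ x, f x * g x ∂μ)^2 ≤ (∫⁻ x, f x^2 ∂μ) * (∫⁻ x, g x^2 ∂μ) := by
  have hconj : Real.HolderConjugate 2 2 := Real.HolderConjugate.two_two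
  have H := ENNReal.lintegral_mul_le_Lp_mul_Lq μ hconj hf hg
  simp only [Pi.mul_apply] at H
  have h2 : ∀ F : ℝ → ℝ≥0∞, (∫⁻ x, F x ^ (2:ℝ) ∂μ) = ∫⁻ x, F x ^ 2 ∂μ := by
    intro F
    congr 1
    ext x
    rw [← ENNReal.rpow_natCast (F x) 2]
    norm_num
  rw [h2, h2] at H
  calc (∫⁻ x, f x * g x ∂μ)^2
      ≤ ((∫⁻ x, f x^2 ∂μ) ^ ((1:ℝ)/2) * (∫⁻ x, g x^2 ∂μ) ^ ((1:ℝ)/2))^2 := by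
        exact pow_le_pow_left' H 2
    _ = (∫⁻ x, f x^2 ∂μ) * (∫⁻ x, g x^2 ∂μ) := by
        rw [mul_pow, ← ENNReal.rpow_natCast (_ ^ ((1:ℝ)/2)) 2,
          ← ENNReal.rpow_natCast ((∫⁻ x, g x^2 ∂μ) ^ ((1:ℝ)/2)) 2,
          ← ENNReal.rpow_mul, ← ENNReal.rpow_mul]
        norm_num

/-- Weighted Cauchy–Schwarz. -/
lemma weighted_CS {A B k φ : ℝ → ℝ} (hA : Measurable A) (hB : Measurable B) (hφ : Measurable φ)
    (hA0 : ∀ η ∈ Ioi (0:ℝ), 0 ≤ A η) (hB0 : ∀ η ∈ Ioi (0:ℝ), 0 ≤ B η)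
    (hφ0 : ∀ η, 0 ≤ φ η)
    (hk : ∀ η ∈ Ioi (0:ℝ), 0 ≤ k η ∧ k η ^ 2 = A η * B η) :
    (∫⁻ η in Ioi (0:ℝ), ENNReal.ofReal (k η * φ η))^2 ≤
      (∫⁻ η in Ioi (0:ℝ), ENNReal.ofReal (A η)) *
        (∫⁻ η in Ioi (0:ℝ), ENNReal.ofReal (B η * φ η^2)) := by
  have h1 : ∫⁻ η in Ioi (0:ℝ), ENNReal.ofReal (k η * φ η)
      = ∫⁻ η in Ioi (0:ℝ),
          ENNReal.ofReal (Real.sqrt (A η)) * ENNReal.ofReal (Real.sqrt (B η) * φ η) := by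
    apply setLIntegral_congr_fun measurableSet_Ioi
    intro η hη
    dsimp only
    rw [← ENNReal.ofReal_mul (Real.sqrt_nonneg _), ← mul_assoc, ← Real.sqrt_mul (hA0 η hη),
      ← (hk η hη).2, Real.sqrt_sq (hk η hη).1]
  rw [h1]
  have h2 := lintegral_sq_le (μ := volume.restrict (Ioi 0))
    (f := fun η => ENNReal.ofReal (Real.sqrt (A η)))
    (g := fun η => ENNReal.ofReal (Real.sqrt (B η) * φ η))
    ((hA.sqrt.ennreal_ofReal).aemeasurable)
    (((hB.sqrt.mul hφ).ennreal_ofReal).aemeasurable)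
  refine h2.trans (le_of_eq ?_)
  congr 1
  · apply setLIntegral_congr_fun measurableSet_Ioi
    intro η hη
    dsimp only
    rw [← ENNReal.ofReal_pow (Real.sqrt_nonneg _), Real.sq_sqrt (hA0 η hη)]
  · apply setLIntegral_congr_fun measurableSet_Ioi
    intro η hη
    dsimp only
    rw [← ENNReal.ofReal_pow (mul_nonneg (Real.sqrt_nonneg _) (hφ0 η)), mul_pow,
      Real.sq_sqrt (hB0 η hη)]


lemma lint_cm {a : ℝ} (ha : 0 ≤ a) (f : ℝ → ℝ) (μ : Measure ℝ) :
    ∫⁻ t, ENNReal.ofReal (a * f t) ∂μ = ENNReal.ofReal a * ∫⁻ t, ENNReal.ofReal (f t) ∂μ := by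
  simp_rw [ENNReal.ofReal_mul ha]
  exact lintegral_const_mul' _ _ ENNReal.ofReal_ne_top

lemma inv_one_add_sq_le_one (x : ℝ) : (1+x^2)⁻¹ ≤ 1 := by
  rw [← one_div]
  rw [div_le_one (by positivity)]
  nlinarith [sq_nonneg x]

/-- The K₁ piece. -/
lemma stepK1 {φ : ℝ → ℝ} (hφm : Measurable φ) (hφ0 : ∀ η, 0 ≤ φ η) (ξ : ℝ) :
    ∫⁻ θ : ℝ, ∫⁻ τ : ℝ,
      (∫⁻ η in Ioi (0:ℝ), ENNReal.ofReal
        ((1+(τ - ξ^5 - η^2/ξ)^2)⁻¹ * (η/(η^2+θ^2)) * φ η))^2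
      ≤ ENNReal.ofReal 64 * ∫⁻ η in Ioi (0:ℝ), ENNReal.ofReal (φ η^2) := by
  -- Cauchy–Schwarz with weights √η
  have hCS : ∀ θ τ : ℝ, θ ≠ 0 →
      (∫⁻ η in Ioi (0:ℝ), ENNReal.ofReal
        ((1+(τ - ξ^5 - η^2/ξ)^2)⁻¹ * (η/(η^2+θ^2)) * φ η))^2
      ≤ ENNReal.ofReal (3/Real.sqrt |θ|) *
        ∫⁻ η in Ioi (0:ℝ), ENNReal.ofReal
          ((1+(τ - ξ^5 - η^2/ξ)^2)⁻¹ * (η*Real.sqrt η/(η^2+θ^2)) * φ η^2) := by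
    intro θ τ hθ
    have h1 := weighted_CS
      (A := fun η => (1+(τ - ξ^5 - η^2/ξ)^2)⁻¹ * (Real.sqrt η/(η^2+θ^2)))
      (B := fun η => (1+(τ - ξ^5 - η^2/ξ)^2)⁻¹ * (η*Real.sqrt η/(η^2+θ^2)))
      (k := fun η => (1+(τ - ξ^5 - η^2/ξ)^2)⁻¹ * (η/(η^2+θ^2))) (φ := φ)
      (by fun_prop) (by fun_prop) hφm
      (fun η _ => by positivity)
      (fun η hη => by
        have h0 : 0 ≤ η * Real.sqrt η :=
          mul_nonneg (le_of_lt (mem_Ioi.mp hη)) (Real.sqrt_nonneg η)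
        positivity)
      hφ0
      (fun η hη => by
        have hη0 : (0:ℝ) < η := mem_Ioi.mp hη
        have hss : Real.sqrt η * Real.sqrt η = η := Real.mul_self_sqrt hη0.le
        constructor
        · positivity
        · have e1 : ((1+(τ - ξ^5 - η^2/ξ)^2)⁻¹ * (Real.sqrt η/(η^2+θ^2))) *
              ((1+(τ - ξ^5 - η^2/ξ)^2)⁻¹ * (η*Real.sqrt η/(η^2+θ^2)))
              = ((1+(τ - ξ^5 - η^2/ξ)^2)⁻¹)^2 *
                ((Real.sqrt η*Real.sqrt η)*η*((η^2+θ^2)⁻¹*(η^2+θ^2)⁻¹)) := by ring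
          rw [e1, hss]; ring)
    refine h1.trans ?_
    have h2 : ∫⁻ η in Ioi (0:ℝ), ENNReal.ofReal
        ((1+(τ - ξ^5 - η^2/ξ)^2)⁻¹ * (Real.sqrt η/(η^2+θ^2)))
        ≤ ENNReal.ofReal (3/Real.sqrt |θ|) := by
      refine le_trans ?_ (lemC3 hθ)
      apply lintegral_mono
      intro η
      apply ENNReal.ofReal_le_ofReal
      exact mul_le_of_le_one_left (by positivity) (inv_one_add_sq_le_one _)
    exact mul_le_mul_left h2 _
  -- τ integration of the second factor
  have hTau : ∀ θ : ℝ,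
      (∫⁻ τ : ℝ, ∫⁻ η in Ioi (0:ℝ), ENNReal.ofReal
        ((1+(τ - ξ^5 - η^2/ξ)^2)⁻¹ * (η*Real.sqrt η/(η^2+θ^2)) * φ η^2))
      ≤ ∫⁻ η in Ioi (0:ℝ), ENNReal.ofReal (4 * ((η*Real.sqrt η/(η^2+θ^2)) * φ η^2)) := by
    intro θ
    rw [lintegral_lintegral_swap (by fun_prop)]
    apply lintegral_mono_ae
    refine (ae_restrict_iff' measurableSet_Ioi).2 (ae_of_all _ fun η hη => ?_)
    have hη0 : (0:ℝ) < η := mem_Ioi.mp hη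
    have hC0 : 0 ≤ (η*Real.sqrt η/(η^2+θ^2)) * φ η^2 := by positivity
    calc ∫⁻ τ : ℝ, ENNReal.ofReal
          ((1+(τ - ξ^5 - η^2/ξ)^2)⁻¹ * (η*Real.sqrt η/(η^2+θ^2)) * φ η^2)
        = ∫⁻ τ : ℝ, ENNReal.ofReal
          (((η*Real.sqrt η/(η^2+θ^2)) * φ η^2) * (1+(τ - ξ^5 - η^2/ξ)^2)⁻¹) := by
          congr 1; ext τ; congr 1; ring
      _ = ENNReal.ofReal ((η*Real.sqrt η/(η^2+θ^2)) * φ η^2) *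
            ∫⁻ τ : ℝ, ENNReal.ofReal ((1+(τ - ξ^5 - η^2/ξ)^2)⁻¹) := lint_cm hC0 _ _
      _ ≤ ENNReal.ofReal ((η*Real.sqrt η/(η^2+θ^2)) * φ η^2) * ENNReal.ofReal 4 := by
          gcongr
          have := lemA' (ξ^5 + η^2/ξ)
          simp_rw [sub_sub] at *
          exact this
      _ = ENNReal.ofReal (4 * ((η*Real.sqrt η/(η^2+θ^2)) * φ η^2)) := by
          rw [← ENNReal.ofReal_mul hC0]; ring_nf
  -- assemble
  have hae : ∀ᵐ θ : ℝ, θ ≠ 0 := by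
    rw [ae_iff]
    simp only [ne_eq, not_not, Set.setOf_eq_eq_singleton]
    exact measure_singleton 0
  calc ∫⁻ θ : ℝ, ∫⁻ τ : ℝ,
      (∫⁻ η in Ioi (0:ℝ), ENNReal.ofReal
        ((1+(τ - ξ^5 - η^2/ξ)^2)⁻¹ * (η/(η^2+θ^2)) * φ η))^2
      ≤ ∫⁻ θ : ℝ, ENNReal.ofReal (3/Real.sqrt |θ|) *
          ∫⁻ η in Ioi (0:ℝ), ENNReal.ofReal (4 * ((η*Real.sqrt η/(η^2+θ^2)) * φ η^2)) := by
        apply lintegral_mono_ae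
        filter_upwards [hae] with θ hθ
        calc ∫⁻ τ : ℝ, (∫⁻ η in Ioi (0:ℝ), ENNReal.ofReal
              ((1+(τ - ξ^5 - η^2/ξ)^2)⁻¹ * (η/(η^2+θ^2)) * φ η))^2
            ≤ ∫⁻ τ : ℝ, ENNReal.ofReal (3/Real.sqrt |θ|) *
                ∫⁻ η in Ioi (0:ℝ), ENNReal.ofReal
                  ((1+(τ - ξ^5 - η^2/ξ)^2)⁻¹ * (η*Real.sqrt η/(η^2+θ^2)) * φ η^2) :=
              lintegral_mono fun τ => hCS θ τ hθ
          _ = ENNReal.ofReal (3/Real.sqrt |θ|) *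
                ∫⁻ τ : ℝ, ∫⁻ η in Ioi (0:ℝ), ENNReal.ofReal
                  ((1+(τ - ξ^5 - η^2/ξ)^2)⁻¹ * (η*Real.sqrt η/(η^2+θ^2)) * φ η^2) :=
              lintegral_const_mul' _ _ ENNReal.ofReal_ne_top
          _ ≤ ENNReal.ofReal (3/Real.sqrt |θ|) *
                ∫⁻ η in Ioi (0:ℝ), ENNReal.ofReal
                  (4 * ((η*Real.sqrt η/(η^2+θ^2)) * φ η^2)) :=
              mul_le_mul_right (hTau θ) _
    _ = ∫⁻ θ : ℝ, ∫⁻ η in Ioi (0:ℝ), ENNReal.ofReal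
          ((3/Real.sqrt |θ|) * (4 * ((η*Real.sqrt η/(η^2+θ^2)) * φ η^2))) := by
        congr 1
        ext θ
        exact (lint_cm (by positivity) _ _).symm
    _ = ∫⁻ η in Ioi (0:ℝ), ∫⁻ θ : ℝ, ENNReal.ofReal
          ((3/Real.sqrt |θ|) * (4 * ((η*Real.sqrt η/(η^2+θ^2)) * φ η^2))) :=
        lintegral_lintegral_swap (by fun_prop)
    _ ≤ ∫⁻ η in Ioi (0:ℝ), ENNReal.ofReal (64 * φ η^2) := by
        apply lintegral_mono_ae
        refine (ae_restrict_iff' measurableSet_Ioi).2 (ae_of_all _ fun η hη => ?_)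
        have hη0 : (0:ℝ) < η := mem_Ioi.mp hη
        have hsη : 0 < Real.sqrt η := Real.sqrt_pos.mpr hη0
        have hssη : Real.sqrt η * Real.sqrt η = η := Real.mul_self_sqrt hη0.le
        calc ∫⁻ θ : ℝ, ENNReal.ofReal
              ((3/Real.sqrt |θ|) * (4 * ((η*Real.sqrt η/(η^2+θ^2)) * φ η^2)))
            = ∫⁻ θ : ℝ, ENNReal.ofReal
              ((12*Real.sqrt η*φ η^2) * (η/(Real.sqrt |θ| * (η^2+θ^2)))) := by
              congr 1; ext θ; congr 1
              rw [show η/(Real.sqrt |θ| * (η^2+θ^2))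
                  = η * ((Real.sqrt |θ|)⁻¹ * (η^2+θ^2)⁻¹) by rw [division_def, mul_inv]]
              ring
          _ = ENNReal.ofReal (12*Real.sqrt η*φ η^2) *
              ∫⁻ θ : ℝ, ENNReal.ofReal (η/(Real.sqrt |θ| * (η^2+θ^2))) :=
              lint_cm (by positivity) _ _
          _ ≤ ENNReal.ofReal (12*Real.sqrt η*φ η^2) * ENNReal.ofReal (16/3/Real.sqrt η) :=
              mul_le_mul_right (lemC2 hη0) _
          _ = ENNReal.ofReal (64 * φ η^2) := by
              rw [← ENNReal.ofReal_mul (by positivity)]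
              congr 1
              field_simp
              ring
    _ = ENNReal.ofReal 64 * ∫⁻ η in Ioi (0:ℝ), ENNReal.ofReal (φ η^2) :=
        lint_cm (by norm_num) _ _


/-- The K₂ piece. -/
lemma stepK2 {φ : ℝ → ℝ} (hφm : Measurable φ) (hφ0 : ∀ η, 0 ≤ φ η) {ξ : ℝ} (hξ : ξ ≠ 0) :
    ∫⁻ θ : ℝ, ∫⁻ τ : ℝ,
      (∫⁻ η in Ioi (0:ℝ), ENNReal.ofReal
        ((1+(τ - ξ^5 - η^2/ξ)^2)⁻¹ *
          (η/(Real.sqrt |ξ| * Real.sqrt (η^2+θ^2))) * φ η))^2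
      ≤ ENNReal.ofReal 32 * ∫⁻ η in Ioi (0:ℝ), ENNReal.ofReal (φ η^2) := by
  have hξ0 : (0:ℝ) < |ξ| := abs_pos.mpr hξ
  have hsξ : Real.sqrt |ξ| * Real.sqrt |ξ| = |ξ| := Real.mul_self_sqrt hξ0.le
  -- Cauchy–Schwarz with weight 2η
  have hCS : ∀ θ τ : ℝ,
      (∫⁻ η in Ioi (0:ℝ), ENNReal.ofReal
        ((1+(τ - ξ^5 - η^2/ξ)^2)⁻¹ * (η/(Real.sqrt |ξ| * Real.sqrt (η^2+θ^2))) * φ η))^2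
      ≤ ENNReal.ofReal (4*|ξ|) *
        ∫⁻ η in Ioi (0:ℝ), ENNReal.ofReal
          ((1+(τ - ξ^5 - η^2/ξ)^2)⁻¹ * (η*((2:ℝ)⁻¹*(|ξ|⁻¹*(η^2+θ^2)⁻¹))) * φ η^2) := by
    intro θ τ
    have h1 := weighted_CS
      (A := fun η => (1+(τ - ξ^5 - η^2/ξ)^2)⁻¹ * (2*η))
      (B := fun η => (1+(τ - ξ^5 - η^2/ξ)^2)⁻¹ * (η*((2:ℝ)⁻¹*(|ξ|⁻¹*(η^2+θ^2)⁻¹))))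
      (k := fun η => (1+(τ - ξ^5 - η^2/ξ)^2)⁻¹ * (η/(Real.sqrt |ξ| * Real.sqrt (η^2+θ^2))))
      (φ := φ)
      (by fun_prop) (by fun_prop) hφm
      (fun η hη => by have h0 := le_of_lt (mem_Ioi.mp hη); positivity)
      (fun η hη => by have h0 := le_of_lt (mem_Ioi.mp hη); positivity)
      hφ0
      (fun η hη => by
        have hη0 : (0:ℝ) < η := mem_Ioi.mp hη
        have hss : Real.sqrt (η^2+θ^2) * Real.sqrt (η^2+θ^2) = η^2+θ^2 :=
          Real.mul_self_sqrt (by positivity)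
        constructor
        · positivity
        · have e1 : ((1+(τ - ξ^5 - η^2/ξ)^2)⁻¹ *
              (η/(Real.sqrt |ξ| * Real.sqrt (η^2+θ^2))))^2
              = ((1+(τ - ξ^5 - η^2/ξ)^2)⁻¹)^2 *
                (η*η*((Real.sqrt |ξ| * Real.sqrt |ξ|)⁻¹ *
                  (Real.sqrt (η^2+θ^2) * Real.sqrt (η^2+θ^2))⁻¹)) := by ring
          rw [e1, hsξ, hss]
          ring)
    refine h1.trans ?_
    have h2 : ∫⁻ η in Ioi (0:ℝ), ENNReal.ofReal
        ((1+(τ - ξ^5 - η^2/ξ)^2)⁻¹ * (2*η)) ≤ ENNReal.ofReal (4*|ξ|) := by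
      refine le_trans (le_of_eq ?_) (lemB ξ (τ - ξ^5) hξ)
      apply lintegral_congr
      intro η
      congr 1
      ring
    exact mul_le_mul_left h2 _
  -- τ integration of the second factor
  have hTau : ∀ θ : ℝ,
      (∫⁻ τ : ℝ, ∫⁻ η in Ioi (0:ℝ), ENNReal.ofReal
        ((1+(τ - ξ^5 - η^2/ξ)^2)⁻¹ * (η*((2:ℝ)⁻¹*(|ξ|⁻¹*(η^2+θ^2)⁻¹))) * φ η^2))
      ≤ ∫⁻ η in Ioi (0:ℝ), ENNReal.ofReal
          (4 * ((η*((2:ℝ)⁻¹*(|ξ|⁻¹*(η^2+θ^2)⁻¹))) * φ η^2)) := by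
    intro θ
    rw [lintegral_lintegral_swap (by fun_prop)]
    apply lintegral_mono_ae
    refine (ae_restrict_iff' measurableSet_Ioi).2 (ae_of_all _ fun η hη => ?_)
    have hη0 : (0:ℝ) < η := mem_Ioi.mp hη
    have hC0 : 0 ≤ (η*((2:ℝ)⁻¹*(|ξ|⁻¹*(η^2+θ^2)⁻¹))) * φ η^2 := by positivity
    calc ∫⁻ τ : ℝ, ENNReal.ofReal
          ((1+(τ - ξ^5 - η^2/ξ)^2)⁻¹ * (η*((2:ℝ)⁻¹*(|ξ|⁻¹*(η^2+θ^2)⁻¹))) * φ η^2)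
        = ∫⁻ τ : ℝ, ENNReal.ofReal
          (((η*((2:ℝ)⁻¹*(|ξ|⁻¹*(η^2+θ^2)⁻¹))) * φ η^2) * (1+(τ - ξ^5 - η^2/ξ)^2)⁻¹) := by
          congr 1; ext τ; congr 1; ring
      _ = ENNReal.ofReal ((η*((2:ℝ)⁻¹*(|ξ|⁻¹*(η^2+θ^2)⁻¹))) * φ η^2) *
            ∫⁻ τ : ℝ, ENNReal.ofReal ((1+(τ - ξ^5 - η^2/ξ)^2)⁻¹) := lint_cm hC0 _ _
      _ ≤ ENNReal.ofReal ((η*((2:ℝ)⁻¹*(|ξ|⁻¹*(η^2+θ^2)⁻¹))) * φ η^2) * ENNReal.ofReal 4 := by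
          gcongr
          have := lemA' (ξ^5 + η^2/ξ)
          simp_rw [sub_sub] at *
          exact this
      _ = ENNReal.ofReal (4 * ((η*((2:ℝ)⁻¹*(|ξ|⁻¹*(η^2+θ^2)⁻¹))) * φ η^2)) := by
          rw [← ENNReal.ofReal_mul hC0]; ring_nf
  -- assemble
  calc ∫⁻ θ : ℝ, ∫⁻ τ : ℝ,
      (∫⁻ η in Ioi (0:ℝ), ENNReal.ofReal
        ((1+(τ - ξ^5 - η^2/ξ)^2)⁻¹ *
          (η/(Real.sqrt |ξ| * Real.sqrt (η^2+θ^2))) * φ η))^2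
      ≤ ∫⁻ θ : ℝ, ENNReal.ofReal (4*|ξ|) *
          ∫⁻ η in Ioi (0:ℝ), ENNReal.ofReal
            (4 * ((η*((2:ℝ)⁻¹*(|ξ|⁻¹*(η^2+θ^2)⁻¹))) * φ η^2)) := by
        apply lintegral_mono
        intro θ
        calc ∫⁻ τ : ℝ, (∫⁻ η in Ioi (0:ℝ), ENNReal.ofReal
              ((1+(τ - ξ^5 - η^2/ξ)^2)⁻¹ *
                (η/(Real.sqrt |ξ| * Real.sqrt (η^2+θ^2))) * φ η))^2
            ≤ ∫⁻ τ : ℝ, ENNReal.ofReal (4*|ξ|) *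
                ∫⁻ η in Ioi (0:ℝ), ENNReal.ofReal
                  ((1+(τ - ξ^5 - η^2/ξ)^2)⁻¹ * (η*((2:ℝ)⁻¹*(|ξ|⁻¹*(η^2+θ^2)⁻¹))) * φ η^2) :=
              lintegral_mono fun τ => hCS θ τ
          _ = ENNReal.ofReal (4*|ξ|) * ∫⁻ τ : ℝ, ∫⁻ η in Ioi (0:ℝ), ENNReal.ofReal
                ((1+(τ - ξ^5 - η^2/ξ)^2)⁻¹ * (η*((2:ℝ)⁻¹*(|ξ|⁻¹*(η^2+θ^2)⁻¹))) * φ η^2) :=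
              lintegral_const_mul' _ _ ENNReal.ofReal_ne_top
          _ ≤ ENNReal.ofReal (4*|ξ|) * ∫⁻ η in Ioi (0:ℝ), ENNReal.ofReal
                (4 * ((η*((2:ℝ)⁻¹*(|ξ|⁻¹*(η^2+θ^2)⁻¹))) * φ η^2)) :=
              mul_le_mul_right (hTau θ) _
    _ = ∫⁻ θ : ℝ, ∫⁻ η in Ioi (0:ℝ), ENNReal.ofReal
          ((4*|ξ|) * (4 * ((η*((2:ℝ)⁻¹*(|ξ|⁻¹*(η^2+θ^2)⁻¹))) * φ η^2))) := by
        congr 1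
        ext θ
        exact (lint_cm (by positivity) _ _).symm
    _ = ∫⁻ η in Ioi (0:ℝ), ∫⁻ θ : ℝ, ENNReal.ofReal
          ((4*|ξ|) * (4 * ((η*((2:ℝ)⁻¹*(|ξ|⁻¹*(η^2+θ^2)⁻¹))) * φ η^2))) :=
        lintegral_lintegral_swap (by fun_prop)
    _ ≤ ∫⁻ η in Ioi (0:ℝ), ENNReal.ofReal (32 * φ η^2) := by
        apply lintegral_mono_ae
        refine (ae_restrict_iff' measurableSet_Ioi).2 (ae_of_all _ fun η hη => ?_)
        have hη0 : (0:ℝ) < η := mem_Ioi.mp hη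
        calc ∫⁻ θ : ℝ, ENNReal.ofReal
              ((4*|ξ|) * (4 * ((η*((2:ℝ)⁻¹*(|ξ|⁻¹*(η^2+θ^2)⁻¹))) * φ η^2)))
            = ∫⁻ θ : ℝ, ENNReal.ofReal ((8 * φ η^2) * (η/(η^2+θ^2))) := by
              congr 1; ext θ; congr 1
              rw [division_def]
              field_simp
              ring
          _ = ENNReal.ofReal (8 * φ η^2) *
              ∫⁻ θ : ℝ, ENNReal.ofReal (η/(η^2+θ^2)) := lint_cm (by positivity) _ _
          _ ≤ ENNReal.ofReal (8 * φ η^2) * ENNReal.ofReal 4 :=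
              mul_le_mul_right (lemC1 hη0) _
          _ = ENNReal.ofReal (32 * φ η^2) := by
              rw [← ENNReal.ofReal_mul (by positivity)]
              congr 1
              ring
    _ = ENNReal.ofReal 32 * ∫⁻ η in Ioi (0:ℝ), ENNReal.ofReal (φ η^2) :=
        lint_cm (by norm_num) _ _


lemma sq3 (a b : ℝ≥0∞) : (a+b)^2 ≤ 3*(a^2+b^2) := by
  have hab : a*b ≤ a^2 + b^2 := by
    rcases le_total a b with h | h
    · calc a*b ≤ b*b := mul_le_mul_left h b
        _ = b^2 := (sq b).symm
        _ ≤ a^2+b^2 := le_add_self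
    · calc a*b ≤ a*a := mul_le_mul_right h a
        _ = a^2 := (sq a).symm
        _ ≤ a^2+b^2 := le_self_add
  calc (a+b)^2 = a^2 + b^2 + (a*b + a*b) := by ring
    _ ≤ (a^2+b^2) + ((a^2+b^2) + (a^2+b^2)) := by gcongr
    _ = 3*(a^2+b^2) := by ring

/-- The per-`ξ` estimate. -/
lemma keyxi (ψ : ℝ → ℝ → ℝ) (hm : Measurable (Function.uncurry ψ))
    (hpos : ∀ ξ η : ℝ, 0 ≤ ψ ξ η) {ξ : ℝ} (hξ : ξ ≠ 0) :
    ∫⁻ θ : ℝ, ∫⁻ τ : ℝ,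
      (∫⁻ η in Ioi (0:ℝ), ENNReal.ofReal
        (jap ((η ^ 2 + θ ^ 2) / ξ) ^ ((1:ℝ)/2) / jap (τ - ξ ^ 5 - η ^ 2 / ξ) ^ 2 *
          (η / (η ^ 2 + θ ^ 2)) * ψ ξ η)) ^ 2 ≤
    ENNReal.ofReal 288 * ∫⁻ η in Ioi (0:ℝ), ENNReal.ofReal (ψ ξ η ^ 2) := by
  have hφm : Measurable (ψ ξ) := hm.comp measurable_prodMk_left
  have hφ0 : ∀ η, 0 ≤ ψ ξ η := hpos ξ
  have hξ0 : (0:ℝ) < |ξ| := abs_pos.mpr hξ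
  -- pointwise bound on the inner integral
  have hinner : ∀ θ τ : ℝ,
      (∫⁻ η in Ioi (0:ℝ), ENNReal.ofReal
        (jap ((η ^ 2 + θ ^ 2) / ξ) ^ ((1:ℝ)/2) / jap (τ - ξ ^ 5 - η ^ 2 / ξ) ^ 2 *
          (η / (η ^ 2 + θ ^ 2)) * ψ ξ η))
      ≤ (∫⁻ η in Ioi (0:ℝ), ENNReal.ofReal
          ((1+(τ - ξ^5 - η^2/ξ)^2)⁻¹ * (η/(η^2+θ^2)) * ψ ξ η))
        + ∫⁻ η in Ioi (0:ℝ), ENNReal.ofReal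
          ((1+(τ - ξ^5 - η^2/ξ)^2)⁻¹ *
            (η/(Real.sqrt |ξ| * Real.sqrt (η^2+θ^2))) * ψ ξ η) := by
    intro θ τ
    have hpt : ∀ η ∈ Ioi (0:ℝ),
        ENNReal.ofReal
          (jap ((η ^ 2 + θ ^ 2) / ξ) ^ ((1:ℝ)/2) / jap (τ - ξ ^ 5 - η ^ 2 / ξ) ^ 2 *
            (η / (η ^ 2 + θ ^ 2)) * ψ ξ η)
        ≤ ENNReal.ofReal ((1+(τ - ξ^5 - η^2/ξ)^2)⁻¹ * (η/(η^2+θ^2)) * ψ ξ η)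
          + ENNReal.ofReal ((1+(τ - ξ^5 - η^2/ξ)^2)⁻¹ *
              (η/(Real.sqrt |ξ| * Real.sqrt (η^2+θ^2))) * ψ ξ η) := by
      intro η hη
      have hη0 : (0:ℝ) < η := mem_Ioi.mp hη
      have hs0 : (0:ℝ) < η^2+θ^2 := by positivity
      have hg0 : (0:ℝ) ≤ (1+(τ - ξ^5 - η^2/ξ)^2)⁻¹ := by positivity
      rw [← ENNReal.ofReal_add (mul_nonneg (by positivity) (hφ0 η))
        (mul_nonneg (by positivity) (hφ0 η))]
      apply ENNReal.ofReal_le_ofReal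
      have hker : jap ((η ^ 2 + θ ^ 2) / ξ) ^ ((1:ℝ)/2) / jap (τ - ξ ^ 5 - η ^ 2 / ξ) ^ 2 *
            (η / (η ^ 2 + θ ^ 2))
          ≤ (1+(τ - ξ^5 - η^2/ξ)^2)⁻¹ * (η/(η^2+θ^2))
            + (1+(τ - ξ^5 - η^2/ξ)^2)⁻¹ * (η/(Real.sqrt |ξ| * Real.sqrt (η^2+θ^2))) := by
        have habs : |(η^2+θ^2)/ξ| = (η^2+θ^2)/|ξ| := by
          rw [abs_div, abs_of_pos hs0]
        have hsqz : Real.sqrt ((η^2+θ^2)/|ξ|)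
            = Real.sqrt (η^2+θ^2)/Real.sqrt |ξ| := Real.sqrt_div hs0.le _
        have hss : Real.sqrt (η^2+θ^2) * Real.sqrt (η^2+θ^2) = η^2+θ^2 :=
          Real.mul_self_sqrt hs0.le
        have hzP : Real.sqrt |(η^2+θ^2)/ξ| * (η/(η^2+θ^2))
            = η/(Real.sqrt |ξ| * Real.sqrt (η^2+θ^2)) := by
          rw [habs, hsqz]
          rw [div_mul_div_comm, div_eq_div_iff (by positivity) (by positivity)]
          linear_combination (Real.sqrt |ξ| * η) * hss
        calc jap ((η ^ 2 + θ ^ 2) / ξ) ^ ((1:ℝ)/2) / jap (τ - ξ ^ 5 - η ^ 2 / ξ) ^ 2 *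
              (η / (η ^ 2 + θ ^ 2))
            = jap ((η ^ 2 + θ ^ 2) / ξ) ^ ((1:ℝ)/2) *
              ((1+(τ - ξ^5 - η^2/ξ)^2)⁻¹ * (η / (η ^ 2 + θ ^ 2))) := by
              rw [jap_sq, div_eq_mul_inv]
              ring
          _ ≤ (1 + Real.sqrt |(η^2+θ^2)/ξ|) *
              ((1+(τ - ξ^5 - η^2/ξ)^2)⁻¹ * (η / (η ^ 2 + θ ^ 2))) := by
              apply mul_le_mul_of_nonneg_right (jap_half_le _)
              positivity
          _ = (1+(τ - ξ^5 - η^2/ξ)^2)⁻¹ * (η/(η^2+θ^2))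
              + (1+(τ - ξ^5 - η^2/ξ)^2)⁻¹ *
                (Real.sqrt |(η^2+θ^2)/ξ| * (η/(η^2+θ^2))) := by ring
          _ = _ := by rw [hzP]
      calc jap ((η ^ 2 + θ ^ 2) / ξ) ^ ((1:ℝ)/2) / jap (τ - ξ ^ 5 - η ^ 2 / ξ) ^ 2 *
            (η / (η ^ 2 + θ ^ 2)) * ψ ξ η
          ≤ ((1+(τ - ξ^5 - η^2/ξ)^2)⁻¹ * (η/(η^2+θ^2))
            + (1+(τ - ξ^5 - η^2/ξ)^2)⁻¹ *
              (η/(Real.sqrt |ξ| * Real.sqrt (η^2+θ^2)))) * ψ ξ η :=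
            mul_le_mul_of_nonneg_right hker (hφ0 η)
        _ = _ := by ring
    calc (∫⁻ η in Ioi (0:ℝ), ENNReal.ofReal
          (jap ((η ^ 2 + θ ^ 2) / ξ) ^ ((1:ℝ)/2) / jap (τ - ξ ^ 5 - η ^ 2 / ξ) ^ 2 *
            (η / (η ^ 2 + θ ^ 2)) * ψ ξ η))
        ≤ ∫⁻ η in Ioi (0:ℝ), (ENNReal.ofReal
              ((1+(τ - ξ^5 - η^2/ξ)^2)⁻¹ * (η/(η^2+θ^2)) * ψ ξ η)
            + ENNReal.ofReal ((1+(τ - ξ^5 - η^2/ξ)^2)⁻¹ *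
                (η/(Real.sqrt |ξ| * Real.sqrt (η^2+θ^2))) * ψ ξ η)) :=
          lintegral_mono_ae ((ae_restrict_iff' measurableSet_Ioi).2 (ae_of_all _ hpt))
      _ = _ := lintegral_add_left (by fun_prop) _
  -- combine
  calc ∫⁻ θ : ℝ, ∫⁻ τ : ℝ,
      (∫⁻ η in Ioi (0:ℝ), ENNReal.ofReal
        (jap ((η ^ 2 + θ ^ 2) / ξ) ^ ((1:ℝ)/2) / jap (τ - ξ ^ 5 - η ^ 2 / ξ) ^ 2 *
          (η / (η ^ 2 + θ ^ 2)) * ψ ξ η)) ^ 2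
      ≤ ∫⁻ θ : ℝ, ∫⁻ τ : ℝ, (3 * ((∫⁻ η in Ioi (0:ℝ), ENNReal.ofReal
            ((1+(τ - ξ^5 - η^2/ξ)^2)⁻¹ * (η/(η^2+θ^2)) * ψ ξ η))^2)
          + 3 * ((∫⁻ η in Ioi (0:ℝ), ENNReal.ofReal
            ((1+(τ - ξ^5 - η^2/ξ)^2)⁻¹ *
              (η/(Real.sqrt |ξ| * Real.sqrt (η^2+θ^2))) * ψ ξ η))^2)) := by
        apply lintegral_mono
        intro θ
        apply lintegral_mono
        intro τ
        calc (∫⁻ η in Ioi (0:ℝ), ENNReal.ofReal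
            (jap ((η ^ 2 + θ ^ 2) / ξ) ^ ((1:ℝ)/2) / jap (τ - ξ ^ 5 - η ^ 2 / ξ) ^ 2 *
              (η / (η ^ 2 + θ ^ 2)) * ψ ξ η)) ^ 2
            ≤ ((∫⁻ η in Ioi (0:ℝ), ENNReal.ofReal
                ((1+(τ - ξ^5 - η^2/ξ)^2)⁻¹ * (η/(η^2+θ^2)) * ψ ξ η))
              + ∫⁻ η in Ioi (0:ℝ), ENNReal.ofReal
                ((1+(τ - ξ^5 - η^2/ξ)^2)⁻¹ *
                  (η/(Real.sqrt |ξ| * Real.sqrt (η^2+θ^2))) * ψ ξ η))^2 := by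
              exact pow_le_pow_left' (hinner θ τ) 2
          _ ≤ _ := by
              refine (sq3 _ _).trans (le_of_eq ?_)
              ring
    _ ≤ ENNReal.ofReal 288 * ∫⁻ η in Ioi (0:ℝ), ENNReal.ofReal (ψ ξ η ^ 2) := by
        have hm1 : Measurable (fun p : ℝ × ℝ =>
            (∫⁻ η in Ioi (0:ℝ), ENNReal.ofReal
              ((1+(p.2 - ξ^5 - η^2/ξ)^2)⁻¹ * (η/(η^2+p.1^2)) * ψ ξ η))) := by
          apply Measurable.lintegral_prod_right'
            (f := fun q : (ℝ × ℝ) × ℝ => ENNReal.ofReal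
              ((1+(q.1.2 - ξ^5 - q.2^2/ξ)^2)⁻¹ * (q.2/(q.2^2+q.1.1^2)) * ψ ξ q.2))
          fun_prop
        have hm2 : Measurable (fun p : ℝ × ℝ =>
            (∫⁻ η in Ioi (0:ℝ), ENNReal.ofReal
              ((1+(p.2 - ξ^5 - η^2/ξ)^2)⁻¹ *
                (η/(Real.sqrt |ξ| * Real.sqrt (η^2+p.1^2))) * ψ ξ η))) := by
          apply Measurable.lintegral_prod_right'
            (f := fun q : (ℝ × ℝ) × ℝ => ENNReal.ofReal
              ((1+(q.1.2 - ξ^5 - q.2^2/ξ)^2)⁻¹ *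
                (q.2/(Real.sqrt |ξ| * Real.sqrt (q.2^2+q.1.1^2))) * ψ ξ q.2))
          fun_prop
        have hsplit : ∀ θ : ℝ, (∫⁻ τ : ℝ, (3 * ((∫⁻ η in Ioi (0:ℝ), ENNReal.ofReal
              ((1+(τ - ξ^5 - η^2/ξ)^2)⁻¹ * (η/(η^2+θ^2)) * ψ ξ η))^2)
            + 3 * ((∫⁻ η in Ioi (0:ℝ), ENNReal.ofReal
              ((1+(τ - ξ^5 - η^2/ξ)^2)⁻¹ *
                (η/(Real.sqrt |ξ| * Real.sqrt (η^2+θ^2))) * ψ ξ η))^2)))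
            = 3 * (∫⁻ τ : ℝ, (∫⁻ η in Ioi (0:ℝ), ENNReal.ofReal
                ((1+(τ - ξ^5 - η^2/ξ)^2)⁻¹ * (η/(η^2+θ^2)) * ψ ξ η))^2)
            + 3 * (∫⁻ τ : ℝ, (∫⁻ η in Ioi (0:ℝ), ENNReal.ofReal
                ((1+(τ - ξ^5 - η^2/ξ)^2)⁻¹ *
                  (η/(Real.sqrt |ξ| * Real.sqrt (η^2+θ^2))) * ψ ξ η))^2) := by
          intro θ
          rw [lintegral_add_left]
          · rw [lintegral_const_mul' _ _ (by norm_num), lintegral_const_mul' _ _ (by norm_num)]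
          · exact (((hm1.comp (measurable_prodMk_left (x := θ))).pow_const 2).const_mul 3)
        simp_rw [hsplit]
        rw [lintegral_add_left]
        swap
        · apply Measurable.const_mul
          apply Measurable.lintegral_prod_right' (f := fun p : ℝ × ℝ =>
            (∫⁻ η in Ioi (0:ℝ), ENNReal.ofReal
              ((1+(p.2 - ξ^5 - η^2/ξ)^2)⁻¹ * (η/(η^2+p.1^2)) * ψ ξ η))^2)
          exact hm1.pow_const 2
        rw [lintegral_const_mul' _ _ (by norm_num), lintegral_const_mul' _ _ (by norm_num)]
        calc 3 * (∫⁻ θ : ℝ, ∫⁻ τ : ℝ, (∫⁻ η in Ioi (0:ℝ), ENNReal.ofReal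
              ((1+(τ - ξ^5 - η^2/ξ)^2)⁻¹ * (η/(η^2+θ^2)) * ψ ξ η))^2)
            + 3 * (∫⁻ θ : ℝ, ∫⁻ τ : ℝ, (∫⁻ η in Ioi (0:ℝ), ENNReal.ofReal
              ((1+(τ - ξ^5 - η^2/ξ)^2)⁻¹ *
                (η/(Real.sqrt |ξ| * Real.sqrt (η^2+θ^2))) * ψ ξ η))^2)
            ≤ 3 * (ENNReal.ofReal 64 * ∫⁻ η in Ioi (0:ℝ), ENNReal.ofReal (ψ ξ η^2))
              + 3 * (ENNReal.ofReal 32 * ∫⁻ η in Ioi (0:ℝ), ENNReal.ofReal (ψ ξ η^2)) := by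
              gcongr
              · exact stepK1 hφm hφ0 ξ
              · exact stepK2 hφm hφ0 hξ
          _ = (3 * ENNReal.ofReal 64 + 3 * ENNReal.ofReal 32) *
                ∫⁻ η in Ioi (0:ℝ), ENNReal.ofReal (ψ ξ η^2) := by ring
          _ = ENNReal.ofReal 288 * ∫⁻ η in Ioi (0:ℝ), ENNReal.ofReal (ψ ξ η ^ 2) := by
              congr 1
              rw [show (3:ℝ≥0∞) = ENNReal.ofReal 3 by simp]
              rw [← ENNReal.ofReal_mul (by norm_num), ← ENNReal.ofReal_mul (by norm_num),
                ← ENNReal.ofReal_add (by norm_num) (by norm_num)]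
              norm_num



/-- Core estimate in the proof of `‖μ(t) W₂ h‖_{X^{0,1/2}} ≲ ‖χ_{t>0} h‖_{ℋ⁰}`:
`(∫_{ℝ³} (∫_0^∞ ⟨(η²+θ²)/ξ⟩^{1/2} ⟨τ − ξ⁵ − η²/ξ⟩^{−2} (η/(η²+θ²)) ψ(ξ,η) dη)² dτ dθ dξ)^{1/2}
  ≤ C (∫_ℝ ∫_0^∞ ψ(ξ,η)² dη dξ)^{1/2}`. -/
theorem stmt10 :
    ∃ C > (0:ℝ), ∀ ψ : ℝ → ℝ → ℝ, Measurable (Function.uncurry ψ) →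
      (∀ ξ η : ℝ, 0 ≤ ψ ξ η) →
      (∫⁻ ξ : ℝ, ∫⁻ θ : ℝ, ∫⁻ τ : ℝ,
        (∫⁻ η in Set.Ioi (0:ℝ), ENNReal.ofReal
          (jap ((η ^ 2 + θ ^ 2) / ξ) ^ ((1:ℝ)/2) / jap (τ - ξ ^ 5 - η ^ 2 / ξ) ^ 2 *
            (η / (η ^ 2 + θ ^ 2)) * ψ ξ η)) ^ 2) ^ ((1:ℝ)/2) ≤
      ENNReal.ofReal C *
        (∫⁻ ξ : ℝ, ∫⁻ η in Set.Ioi (0:ℝ), ENNReal.ofReal (ψ ξ η ^ 2)) ^ ((1:ℝ)/2) := by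
  refine ⟨17, by norm_num, fun ψ hm hpos => ?_⟩
  have hae : ∀ᵐ ξ : ℝ, ξ ≠ 0 := by
    rw [ae_iff]
    simp only [ne_eq, not_not, Set.setOf_eq_eq_singleton]
    exact measure_singleton 0
  have h1 : (∫⁻ ξ : ℝ, ∫⁻ θ : ℝ, ∫⁻ τ : ℝ,
        (∫⁻ η in Set.Ioi (0:ℝ), ENNReal.ofReal
          (jap ((η ^ 2 + θ ^ 2) / ξ) ^ ((1:ℝ)/2) / jap (τ - ξ ^ 5 - η ^ 2 / ξ) ^ 2 *
            (η / (η ^ 2 + θ ^ 2)) * ψ ξ η)) ^ 2)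
      ≤ ∫⁻ ξ : ℝ, ENNReal.ofReal 288 * ∫⁻ η in Set.Ioi (0:ℝ), ENNReal.ofReal (ψ ξ η ^ 2) := by
    apply lintegral_mono_ae
    filter_upwards [hae] with ξ hξ
    exact keyxi ψ hm hpos hξ
  calc (∫⁻ ξ : ℝ, ∫⁻ θ : ℝ, ∫⁻ τ : ℝ,
        (∫⁻ η in Set.Ioi (0:ℝ), ENNReal.ofReal
          (jap ((η ^ 2 + θ ^ 2) / ξ) ^ ((1:ℝ)/2) / jap (τ - ξ ^ 5 - η ^ 2 / ξ) ^ 2 *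
            (η / (η ^ 2 + θ ^ 2)) * ψ ξ η)) ^ 2) ^ ((1:ℝ)/2)
      ≤ (∫⁻ ξ : ℝ, ENNReal.ofReal 288 *
          ∫⁻ η in Set.Ioi (0:ℝ), ENNReal.ofReal (ψ ξ η ^ 2)) ^ ((1:ℝ)/2) :=
        ENNReal.rpow_le_rpow h1 (by norm_num)
    _ = (ENNReal.ofReal 288 * ∫⁻ ξ : ℝ,
          ∫⁻ η in Set.Ioi (0:ℝ), ENNReal.ofReal (ψ ξ η ^ 2)) ^ ((1:ℝ)/2) := by
        rw [lintegral_const_mul' _ _ ENNReal.ofReal_ne_top]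
    _ = (ENNReal.ofReal 288) ^ ((1:ℝ)/2) * (∫⁻ ξ : ℝ,
          ∫⁻ η in Set.Ioi (0:ℝ), ENNReal.ofReal (ψ ξ η ^ 2)) ^ ((1:ℝ)/2) :=
        ENNReal.mul_rpow_of_nonneg _ _ (by norm_num)
    _ ≤ ENNReal.ofReal 17 * (∫⁻ ξ : ℝ,
          ∫⁻ η in Set.Ioi (0:ℝ), ENNReal.ofReal (ψ ξ η ^ 2)) ^ ((1:ℝ)/2) := by
        gcongr
        rw [ENNReal.ofReal_rpow_of_pos (by norm_num)]
        apply ENNReal.ofReal_le_ofReal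
        rw [← Real.sqrt_eq_rpow]
        calc Real.sqrt 288 ≤ Real.sqrt 289 := Real.sqrt_le_sqrt (by norm_num)
          _ = 17 := by
            rw [show (289:ℝ) = 17^2 by norm_num, Real.sqrt_sq (by norm_num)]
end

section
/- Let ξ, ξ₁, θ, θ₁ ∈ ℝ with ξ ≠ 0, ξ₁ ≠ 0, and ξ ≠ ξ₁. Then one has the resonance identity ξ₁⁵ + (ξ−ξ₁)⁵ − ξ⁵ + θ²/ξ − θ₁²/ξ₁ − (θ−θ₁)²/(ξ−ξ₁) = −5 ξ ξ₁ (ξ−ξ₁)(ξ² − ξξ₁ + ξ₁²) − (θξ₁ − θ₁ξ)² / (ξ ξ₁ (ξ−ξ₁)), and moreover, since both summands on the right have the same sign, |ξ₁⁵ + (ξ−ξ₁)⁵ − ξ⁵ + θ²/ξ − θ₁²/ξ₁ − (θ−θ₁)²/(ξ−ξ₁)| ≥ (5/2) |ξ ξ₁ (ξ−ξ₁)| (ξ² + ξ₁²) + (θξ₁ − θ₁ξ)² / |ξ ξ₁ (ξ−ξ₁)|. -/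
/-- The resonance identity for the fifth order KP–II equation and the resulting lower bound:
for `ξ, ξ₁ ≠ 0` with `ξ ≠ ξ₁`,
`ξ₁⁵ + (ξ−ξ₁)⁵ − ξ⁵ + θ²/ξ − θ₁²/ξ₁ − (θ−θ₁)²/(ξ−ξ₁)
  = −5ξξ₁(ξ−ξ₁)(ξ² − ξξ₁ + ξ₁²) − (θξ₁ − θ₁ξ)²/(ξξ₁(ξ−ξ₁))`,
and since both summands have the same sign,
the absolute value is at least `(5/2)|ξξ₁(ξ−ξ₁)|(ξ² + ξ₁²) + (θξ₁ − θ₁ξ)²/|ξξ₁(ξ−ξ₁)|`. -/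
theorem stmt15 (ξ ξ₁ θ θ₁ : ℝ) (hξ : ξ ≠ 0) (hξ₁ : ξ₁ ≠ 0) (hne : ξ ≠ ξ₁) :
    (ξ₁ ^ 5 + (ξ - ξ₁) ^ 5 - ξ ^ 5 + θ ^ 2 / ξ - θ₁ ^ 2 / ξ₁ - (θ - θ₁) ^ 2 / (ξ - ξ₁) =
      -(5 * ξ * ξ₁ * (ξ - ξ₁) * (ξ ^ 2 - ξ * ξ₁ + ξ₁ ^ 2)) -
        (θ * ξ₁ - θ₁ * ξ) ^ 2 / (ξ * ξ₁ * (ξ - ξ₁))) ∧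
    (5/2) * |ξ * ξ₁ * (ξ - ξ₁)| * (ξ ^ 2 + ξ₁ ^ 2) +
        (θ * ξ₁ - θ₁ * ξ) ^ 2 / |ξ * ξ₁ * (ξ - ξ₁)| ≤
      |ξ₁ ^ 5 + (ξ - ξ₁) ^ 5 - ξ ^ 5 + θ ^ 2 / ξ - θ₁ ^ 2 / ξ₁ - (θ - θ₁) ^ 2 / (ξ - ξ₁)| := by
  have hd : ξ - ξ₁ ≠ 0 := sub_ne_zero.mpr hne
  have hP : ξ * ξ₁ * (ξ - ξ₁) ≠ 0 := by positivity
  set P := ξ * ξ₁ * (ξ - ξ₁) with hPdef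
  set A : ℝ := 5 * (ξ ^ 2 - ξ * ξ₁ + ξ₁ ^ 2) with hAdef
  set Q : ℝ := (θ * ξ₁ - θ₁ * ξ) ^ 2 with hQdef
  have hid : ξ₁ ^ 5 + (ξ - ξ₁) ^ 5 - ξ ^ 5 + θ ^ 2 / ξ - θ₁ ^ 2 / ξ₁ - (θ - θ₁) ^ 2 / (ξ - ξ₁)
      = -(5 * ξ * ξ₁ * (ξ - ξ₁) * (ξ ^ 2 - ξ * ξ₁ + ξ₁ ^ 2)) - Q / P := by
    field_simp
    rw [hPdef, hQdef]
    ring_nf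
  refine ⟨hid, ?_⟩
  rw [hid]
  have hform : -(5 * ξ * ξ₁ * (ξ - ξ₁) * (ξ ^ 2 - ξ * ξ₁ + ξ₁ ^ 2)) - Q / P
      = -((A * P ^ 2 + Q) / P) := by
    field_simp
    ring
  rw [hform, abs_neg, abs_div]
  have hAnn : 0 ≤ A := by nlinarith [sq_nonneg (ξ - ξ₁), sq_nonneg ξ, sq_nonneg ξ₁]
  have hAQ : 0 ≤ A * P ^ 2 + Q :=
    add_nonneg (mul_nonneg hAnn (sq_nonneg _)) (sq_nonneg _)
  rw [abs_of_nonneg hAQ, add_div]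
  have hPabs : 0 < |P| := abs_pos.mpr hP
  have h1 : (5/2) * |P| * (ξ ^ 2 + ξ₁ ^ 2) ≤ A * P ^ 2 / |P| := by
    have : A * P ^ 2 / |P| = A * |P| := by
      rw [div_eq_iff hPabs.ne']
      nlinarith [sq_abs P]
    rw [this]
    have hA : (5/2) * (ξ ^ 2 + ξ₁ ^ 2) ≤ A := by
      have : 0 ≤ (ξ - ξ₁) ^ 2 := sq_nonneg _
      nlinarith
    nlinarith
  linarith
end
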